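/- If κ > 0 is real and β₁₂ = √(2π)·e^{-πκ/2}·e^{iπ/4} / (-ξ·conj(r)·Γ(-iκ)) where r ∈ ℂ satisfies ξ|r|² = 1 - e^{-2πκ} with ξ < 0 excluded (ξ ≠ 0, ξ|r|² < 1), then |β₁₂|² = κ/ξ. -/

import Mathlib

open Complex Real

lemma abs_Gamma_sq (κ : ℝ) (hκ : 0 < κ) :
    (norm (Complex.Gamma (-(Complex.I * (κ : ℂ))))) ^ 2
      = Real.pi / (κ * Real.sinh (Real.pi * κ)) := by
  have h1 : Complex.Gamma (-(Complex.I * (κ : ℂ))) = (starRingEnd ℂ) (Complex.Gamma (Complex.I * κ)) := by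
    rw [← Complex.Gamma_conj]
    congr 1
    simp [mul_comm]
  have h2 : Complex.Gamma (Complex.I * κ) * Complex.Gamma (1 - Complex.I * κ)
      = (Real.pi : ℂ) / Complex.sin ((Real.pi : ℂ) * (Complex.I * κ)) :=
    Complex.Gamma_mul_Gamma_one_sub _
  have hz : (-(Complex.I * (κ : ℂ))) ≠ 0 := by
    simp [Complex.ext_iff, hκ.ne']
  have h3 : Complex.Gamma (1 - Complex.I * κ)
      = -(Complex.I * κ) * Complex.Gamma (-(Complex.I * κ)) := by
    have := Complex.Gamma_add_one _ hz
    rw [← this]; ring_nf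
  have hsin : Complex.sin ((Real.pi : ℂ) * (Complex.I * κ))
      = ((Real.sinh (Real.pi * κ) : ℝ) : ℂ) * Complex.I := by
    rw [show ((Real.pi : ℂ) * (Complex.I * κ)) = ((Real.pi * κ : ℝ) : ℂ) * Complex.I by push_cast; ring,
      Complex.sin_mul_I, Complex.ofReal_sinh]
  have hsinh_pos : 0 < Real.sinh (Real.pi * κ) :=
    Real.sinh_pos_iff.2 (by positivity)
  set S : ℂ := ((Real.sinh (Real.pi * κ) : ℝ) : ℂ) with hS
  have hSne : S ≠ 0 := by rw [hS]; exact_mod_cast hsinh_pos.ne'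
  have key : Complex.Gamma (Complex.I * κ) * (starRingEnd ℂ) (Complex.Gamma (Complex.I * κ))
      = ((Real.pi / (κ * Real.sinh (Real.pi * κ)) : ℝ) : ℂ) := by
    rw [← h1]
    have hstep : Complex.Gamma (Complex.I * κ) * (-(Complex.I * κ) * Complex.Gamma (-(Complex.I * κ)))
        = (Real.pi : ℂ) / (S * Complex.I) := by rw [← h3, h2, hsin]
    have hSI : S * Complex.I ≠ 0 := mul_ne_zero hSne Complex.I_ne_zero
    have h4 : Complex.Gamma (Complex.I * κ) * Complex.Gamma (-(Complex.I * κ)) * ((κ : ℂ) * S)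
        = (Real.pi : ℂ) := by
      have e := hstep
      rw [eq_div_iff hSI] at e
      have hII : Complex.I * Complex.I = -1 := Complex.I_mul_I
      linear_combination e + (Complex.Gamma (Complex.I * κ) * Complex.Gamma (-(Complex.I * κ)) * (κ:ℂ) * S) * hII
    have hden : ((κ : ℂ) * S) ≠ 0 := mul_ne_zero (by exact_mod_cast hκ.ne' : (κ:ℂ) ≠ 0) hSne
    rw [show ((Real.pi / (κ * Real.sinh (Real.pi * κ)) : ℝ) : ℂ) = (Real.pi : ℂ) / ((κ:ℂ) * S) by
      push_cast [hS]; ring]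
    rw [eq_div_iff hden]
    exact h4
  have hns : Complex.normSq (Complex.Gamma (Complex.I * κ)) = Real.pi / (κ * Real.sinh (Real.pi * κ)) := by
    have := Complex.mul_conj (Complex.Gamma (Complex.I * κ))
    rw [key] at this
    exact_mod_cast this.symm
  rw [h1, Complex.norm_conj, Complex.sq_norm, hns]

/-- If κ > 0, ξ ≠ 0, ξ|r|² = 1 - e^{-2πκ} < 1, and
β₁₂ = √(2π) e^{-πκ/2} e^{iπ/4} / (-ξ conj(r) Γ(-iκ)), then |β₁₂|² = κ/ξ. -/
theorem beta12_modulus (κ ξ : ℝ) (r : ℂ) (hκ : 0 < κ) (hξ : ξ ≠ 0)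
    (hr : ξ * (norm r) ^ 2 = 1 - Real.exp (-(2 * Real.pi * κ)))
    (hlt : ξ * (norm r) ^ 2 < 1) :
    (norm
        (((Real.sqrt (2 * Real.pi) : ℂ) * (Real.exp (-(Real.pi * κ) / 2) : ℂ) *
            Complex.exp (Complex.I * (Real.pi : ℂ) / 4)) /
          (-(ξ : ℂ) * (starRingEnd ℂ) r * Complex.Gamma (-(Complex.I * (κ : ℂ)))))) ^ 2
      = κ / ξ := by
  have hπ : (0:ℝ) < Real.pi := Real.pi_pos
  set E : ℝ := Real.exp (-(Real.pi * κ)) with hE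
  have hEpos : 0 < E := Real.exp_pos _
  have hE2 : Real.exp (-(2 * Real.pi * κ)) = E ^ 2 := by
    rw [hE, ← Real.exp_nat_mul]; norm_num; ring_nf
  have hs : Real.sinh (Real.pi * κ) = (E⁻¹ - E) / 2 := by
    rw [Real.sinh_eq, hE, ← Real.exp_neg]; ring_nf
  have hspos : 0 < Real.sinh (Real.pi * κ) := Real.sinh_pos_iff.2 (by positivity)
  have ha : (norm r) ^ 2 ≠ 0 := by
    intro h
    rw [h, mul_zero] at hr
    have h1 : Real.exp (-(2 * Real.pi * κ)) < 1 := Real.exp_lt_one_iff.2 (by nlinarith)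
    linarith
  -- compute the modulus
  rw [norm_div, div_pow, norm_mul, norm_mul, norm_mul, norm_mul]
  rw [Complex.norm_real, Complex.norm_real, Complex.norm_conj, Real.norm_eq_abs, Real.norm_eq_abs]
  have habsexp : norm (Complex.exp (Complex.I * (Real.pi : ℂ) / 4)) = 1 := by
    rw [Complex.norm_exp]
    norm_num [Complex.div_re]
  have habsG := abs_Gamma_sq κ hκ
  rw [habsexp, mul_pow, mul_pow, mul_pow, mul_pow, habsG]
  rw [_root_.abs_of_nonneg (Real.sqrt_nonneg _), Real.sq_sqrt (by positivity : (0:ℝ) ≤ 2 * Real.pi)]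
  rw [_root_.abs_of_nonneg (Real.exp_pos _).le]
  have hexpsq : Real.exp (-(Real.pi * κ) / 2) ^ 2 = E := by
    rw [hE, sq, ← Real.exp_add]; ring_nf
  have habsxi : norm (-(ξ:ℂ)) ^ 2 = ξ ^ 2 := by
    rw [norm_neg, Complex.norm_real, Real.norm_eq_abs, _root_.sq_abs]
  rw [hexpsq, one_pow, mul_one, habsxi]
  rw [hE2] at hr
  have hsne : Real.sinh (Real.pi * κ) ≠ 0 := hspos.ne'
  have har : (norm r) ^ 2 = (1 - E ^ 2) / ξ := by
    rw [eq_div_iff hξ]; linarith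
  rw [har, hs]
  have h1E : 1 - E ^ 2 ≠ 0 := by
    have : ξ * ((1 - E^2)/ξ) = 1 - E^2 := by field_simp
    intro h; rw [h] at har; exact ha (by rw [har]; simp)
  field_simp
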